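/- Let X_1,…,X_n be real numbers and let ξ_{k_1,k_2} = Σ_{i=k_1}^{k_2} X_i if 1 ≤ k_1 ≤ k_2 ≤ n and ξ_{k_1,k_2} = 0 otherwise. For 1 ≤ k ≤ n−1 define Shao and Zhang's self-normalizer V_n(k) = n^{−2} [ Σ_{i=1}^{k} ( ξ_{1,i} − (i/k) ξ_{1,k} )² + Σ_{i=k+1}^{n} ( ξ_{i,n} − ((n−i+1)/(n−k)) ξ_{k+1,n} )² ]. Define the localized CUSUM L(j | s, e) = (e−s+1)^{−1/2} Σ_{i=s}^{j} ( X_i − (e−s+1)^{−1} Σ_{i'=s}^{e} X_{i'} ) for 1 ≤ s ≤ j ≤ e ≤ n, and the localized self-normalizer V^{(C)}(k | s, e) = ((k−s+1)/(e−s+1)²) Σ_{j=s}^{k} L(j | s, k)² + ((e−k)/(e−s+1)²) Σ_{j=k+1}^{e} L(j | k+1, e)². Then for every 1 ≤ k ≤ n−1, V_n(k) = V^{(C)}(k | 1, n); consequently Shao's one-change-point statistic C_n(k)²/V_n(k) coincides with the locally self-normalized statistic L(k | 1, n)²/V^{(C)}(k | 1, n), where C_n(k) = n^{−1/2} Σ_{i=1}^{k}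 (X_i − n^{−1} ξ_{1,n}). -/

import Mathlib

/-- Shao and Zhang's self-normalizer `V n k` coincides with the paper's localized
self-normalizer `V^{(C)}(k | 1, n)`, and consequently Shao's one-change-point statistic
`C_n(k)²/V_n(k)` coincides with the locally self-normalized statistic
`L(k | 1, n)²/V^{(C)}(k | 1, n)`. -/
theorem stmt_9 (n : ℕ) (hn : 2 ≤ n) (X : ℕ → ℝ)
    (ξ : ℕ → ℕ → ℝ)
    (hξ : ∀ k₁ k₂, ξ k₁ k₂ =
      if 1 ≤ k₁ ∧ k₁ ≤ k₂ ∧ k₂ ≤ n then ∑ i ∈ Finset.Icc k₁ k₂, X i else 0)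
    (V : ℕ → ℝ)
    (hV : ∀ k, V k = ((n : ℝ) ^ 2)⁻¹ *
      (∑ i ∈ Finset.Icc 1 k, (ξ 1 i - (i : ℝ) / (k : ℝ) * ξ 1 k) ^ 2
        + ∑ i ∈ Finset.Icc (k + 1) n,
            (ξ i n - ((n : ℝ) - (i : ℝ) + 1) / ((n : ℝ) - (k : ℝ)) * ξ (k + 1) n) ^ 2))
    (L : ℕ → ℕ → ℕ → ℝ)
    (hL : ∀ j s e, L j s e = (Real.sqrt ((e : ℝ) - (s : ℝ) + 1))⁻¹ *
      ∑ i ∈ Finset.Icc s j,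
        (X i - ((e : ℝ) - (s : ℝ) + 1)⁻¹ * ∑ i' ∈ Finset.Icc s e, X i'))
    (VC : ℕ → ℕ → ℕ → ℝ)
    (hVC : ∀ k s e, VC k s e =
      ((k : ℝ) - (s : ℝ) + 1) / ((e : ℝ) - (s : ℝ) + 1) ^ 2 *
          ∑ j ∈ Finset.Icc s k, (L j s k) ^ 2
        + ((e : ℝ) - (k : ℝ)) / ((e : ℝ) - (s : ℝ) + 1) ^ 2 *
            ∑ j ∈ Finset.Icc (k + 1) e, (L j (k + 1) e) ^ 2)
    (C : ℕ → ℝ)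
    (hC : ∀ k, C k = (Real.sqrt (n : ℝ))⁻¹ *
      ∑ i ∈ Finset.Icc 1 k, (X i - (n : ℝ)⁻¹ * ξ 1 n)) :
    ∀ k, 1 ≤ k → k ≤ n - 1 →
      V k = VC k 1 n ∧ (C k) ^ 2 / V k = (L k 1 n) ^ 2 / VC k 1 n := by
  intro k hk1 hk2
  have hn1 : 1 ≤ n := by omega
  have hkn : k + 1 ≤ n := by omega
  have hknN : k ≤ n := by omega
  have hknR : (k : ℝ) < (n : ℝ) := by exact_mod_cast (by omega : k < n)
  have hkR : (0 : ℝ) < (k : ℝ) := by exact_mod_cast hk1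
  have hnR : (0 : ℝ) < (n : ℝ) := by exact_mod_cast (by omega : 0 < n)
  have hnkR : (0 : ℝ) < (n : ℝ) - (k : ℝ) := by linarith
  set S : ℝ := ∑ i ∈ Finset.Icc 1 n, X i with hS
  set T : ℝ := ∑ i ∈ Finset.Icc 1 k, X i with hT
  set U : ℝ := ∑ i ∈ Finset.Icc (k + 1) n, X i with hU
  have hξ1n : ξ 1 n = S := by rw [hξ, if_pos ⟨le_refl 1, hn1, le_refl n⟩]
  have hξ1k : ξ 1 k = T := by rw [hξ, if_pos ⟨le_refl 1, hk1, hknN⟩]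
  have hξkn : ξ (k + 1) n = U := by
    rw [hξ, if_pos ⟨by omega, hkn, le_refl n⟩]
  -- C k = L k 1 n
  have hCL : C k = L k 1 n := by
    rw [hC, hL, hξ1n]
    norm_num
    exact Or.inl (Or.inl (Or.inl hS))
  -- the first localized sum
  have hsum1 : ∀ j ∈ Finset.Icc 1 k,
      (L j 1 k) ^ 2 = (k : ℝ)⁻¹ * (ξ 1 j - (j : ℝ) / (k : ℝ) * ξ 1 k) ^ 2 := by
    intro j hj
    rw [Finset.mem_Icc] at hj
    have hξ1j : ξ 1 j = ∑ i ∈ Finset.Icc 1 j, X i := by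
      rw [hξ, if_pos ⟨le_refl 1, hj.1, le_trans hj.2 hknN⟩]
    rw [hL, hξ1j, hξ1k]
    have e1 : ((k : ℝ) - ((1 : ℕ) : ℝ) + 1) = (k : ℝ) := by push_cast; ring
    rw [e1]
    have e2 : ∑ i ∈ Finset.Icc 1 j, (X i - (k : ℝ)⁻¹ * T)
        = (∑ i ∈ Finset.Icc 1 j, X i) - (j : ℝ) * ((k : ℝ)⁻¹ * T) := by
      rw [Finset.sum_sub_distrib, Finset.sum_const, Nat.card_Icc]
      have : (j + 1 - 1 : ℕ) = j := by omega
      rw [this, nsmul_eq_mul]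
    rw [e2, mul_pow, inv_pow, Real.sq_sqrt hkR.le]
    have hk0 : (k : ℝ) ≠ 0 := hkR.ne'
    field_simp
  -- the second localized sum
  have hsum2 : ∀ j ∈ Finset.Icc (k + 1) n,
      (L j (k + 1) n) ^ 2 = ((n : ℝ) - (k : ℝ))⁻¹ *
        (ξ (k + 1) j - ((j : ℝ) - (k : ℝ)) / ((n : ℝ) - (k : ℝ)) * ξ (k + 1) n) ^ 2 := by
    intro j hj
    rw [Finset.mem_Icc] at hj
    have hξkj : ξ (k + 1) j = ∑ i ∈ Finset.Icc (k + 1) j, X i := by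
      rw [hξ, if_pos ⟨by omega, hj.1, hj.2⟩]
    rw [hL, hξkj, hξkn]
    have e1 : ((n : ℝ) - ((k + 1 : ℕ) : ℝ) + 1) = (n : ℝ) - (k : ℝ) := by push_cast; ring
    rw [e1]
    have e2 : ∑ i ∈ Finset.Icc (k + 1) j, (X i - ((n : ℝ) - (k : ℝ))⁻¹ * U)
        = (∑ i ∈ Finset.Icc (k + 1) j, X i)
          - ((j : ℝ) - (k : ℝ)) * (((n : ℝ) - (k : ℝ))⁻¹ * U) := by
      rw [Finset.sum_sub_distrib, Finset.sum_const, Nat.card_Icc]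
      have : (j + 1 - (k + 1) : ℕ) = j - k := by omega
      rw [this, nsmul_eq_mul]
      have : ((j - k : ℕ) : ℝ) = (j : ℝ) - (k : ℝ) := by
        have : k ≤ j := by omega
        push_cast [this]; ring
      rw [this]
    rw [e2, mul_pow, inv_pow, Real.sq_sqrt hnkR.le]
    have hnk0 : (n : ℝ) - (k : ℝ) ≠ 0 := hnkR.ne'
    field_simp
  -- auxiliary: description of ξ via Ioc
  have hξright : ∀ j, j ≤ n → ξ (j + 1) n = ∑ i ∈ Finset.Ioc j n, X i := by
    intro j hj
    rcases eq_or_lt_of_le hj with rfl | h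
    · rw [hξ, if_neg (by omega), Finset.Ioc_self, Finset.sum_empty]
    · rw [hξ, if_pos ⟨by omega, by omega, le_refl n⟩, Finset.Icc_add_one_left_eq_Ioc]
  have hUIoc : U = ∑ i ∈ Finset.Ioc k n, X i := by
    rw [hU, Finset.Icc_add_one_left_eq_Ioc]
  -- split identity
  have hsplit : ∀ j, k + 1 ≤ j → j ≤ n → ξ (k + 1) j = U - ξ (j + 1) n := by
    intro j hj1 hj2
    have h1 : ξ (k + 1) j = ∑ i ∈ Finset.Ioc k j, X i := by
      rw [hξ, if_pos ⟨by omega, hj1, hj2⟩, Finset.Icc_add_one_left_eq_Ioc]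
    rw [h1, hξright j hj2, hUIoc,
      ← Finset.sum_Ioc_consecutive X (by omega : k ≤ j) hj2]
    ring
  -- reindexing the second sum
  have hreindex :
      ∑ j ∈ Finset.Icc (k + 1) n,
        (ξ (k + 1) j - ((j : ℝ) - (k : ℝ)) / ((n : ℝ) - (k : ℝ)) * ξ (k + 1) n) ^ 2
      = ∑ i ∈ Finset.Icc (k + 1) n,
        (ξ i n - ((n : ℝ) - (i : ℝ) + 1) / ((n : ℝ) - (k : ℝ)) * ξ (k + 1) n) ^ 2 := by
    set f : ℕ → ℝ := fun i =>
      (ξ i n - ((n : ℝ) - (i : ℝ) + 1) / ((n : ℝ) - (k : ℝ)) * ξ (k + 1) n) ^ 2 with hf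
    have hnk0 : (n : ℝ) - (k : ℝ) ≠ 0 := hnkR.ne'
    have hterm : ∀ j ∈ Finset.Icc (k + 1) n,
        (ξ (k + 1) j - ((j : ℝ) - (k : ℝ)) / ((n : ℝ) - (k : ℝ)) * ξ (k + 1) n) ^ 2
          = f (j + 1) := by
      intro j hj
      rw [Finset.mem_Icc] at hj
      rw [hsplit j hj.1 hj.2, hf]
      simp only [hξkn]
      have e1 : ((j + 1 : ℕ) : ℝ) = (j : ℝ) + 1 := by push_cast; ring
      rw [e1]
      field_simp
      ring
    rw [Finset.sum_congr rfl hterm]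
    have hmap : ∑ j ∈ Finset.Icc (k + 1) n, f (j + 1)
        = ∑ i ∈ Finset.Icc (k + 2) (n + 1), f i := by
      rw [show Finset.Icc (k + 2) (n + 1) = Finset.Icc (k + 1 + 1) (n + 1) from rfl,
        ← Finset.map_add_right_Icc (k + 1) n 1, Finset.sum_map]
      rfl
    rw [hmap]
    have hftop : f (n + 1) = 0 := by
      rw [hf]
      simp only
      rw [hξ, if_neg (by omega)]
      have : ((n : ℝ) - ((n + 1 : ℕ) : ℝ) + 1) = 0 := by push_cast; ring
      rw [this]
      norm_num
    have hfbot : f (k + 1) = 0 := by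
      rw [hf]
      simp only [hξkn]
      have : ((n : ℝ) - ((k + 1 : ℕ) : ℝ) + 1) = (n : ℝ) - (k : ℝ) := by push_cast; ring
      rw [this, div_self hnk0]
      ring
    have h1 : ∑ i ∈ Finset.Icc (k + 2) (n + 1), f i
        = ∑ i ∈ Finset.Icc (k + 2) n, f i := by
      rw [show Finset.Icc (k + 2) (n + 1) = Finset.Ioc (k + 1) (n + 1) from
          Finset.Icc_add_one_left_eq_Ioc (k+1) (n+1),
        Finset.sum_Ioc_succ_top (by omega : k + 1 ≤ n), hftop, add_zero,
        ← Finset.Icc_add_one_left_eq_Ioc]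
      rfl
    have h2 : ∑ i ∈ Finset.Icc (k + 1) n, f i
        = f (k + 1) + ∑ i ∈ Finset.Icc (k + 2) n, f i := by
      rw [show Finset.Icc (k + 1) n = Finset.Ioc k n from Finset.Icc_add_one_left_eq_Ioc k n,
        show Finset.Icc (k + 2) n = Finset.Ioc (k + 1) n from Finset.Icc_add_one_left_eq_Ioc (k+1) n,
        ← Finset.sum_Ioc_consecutive f (by omega : k ≤ k + 1) (by omega : k + 1 ≤ n),
        Nat.Ioc_succ_singleton, Finset.sum_singleton]
    rw [h1, h2, hfbot, zero_add]
  -- main equality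
  have hmain : V k = VC k 1 n := by
    rw [hV, hVC, Finset.sum_congr rfl hsum1, Finset.sum_congr rfl hsum2,
      ← Finset.mul_sum, ← Finset.mul_sum, hreindex]
    have hk0 : (k : ℝ) ≠ 0 := hkR.ne'
    have hn0 : (n : ℝ) ≠ 0 := hnR.ne'
    have hnk0 : (n : ℝ) - (k : ℝ) ≠ 0 := hnkR.ne'
    have e1 : ((k : ℝ) - ((1 : ℕ) : ℝ) + 1) = (k : ℝ) := by push_cast; ring
    have e2 : ((n : ℝ) - ((1 : ℕ) : ℝ) + 1) = (n : ℝ) := by push_cast; ring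
    rw [e1, e2]
    generalize (∑ i ∈ Finset.Icc 1 k, (ξ 1 i - (i : ℝ) / (k : ℝ) * ξ 1 k) ^ 2) = A
    generalize (∑ i ∈ Finset.Icc (k + 1) n,
      (ξ i n - ((n : ℝ) - (i : ℝ) + 1) / ((n : ℝ) - (k : ℝ)) * ξ (k + 1) n) ^ 2) = B
    field_simp
  exact ⟨hmain, by rw [hCL, hmain]⟩
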